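/- Let d ≥ 2, δ > 0 with δ < 1/(2d), and α > 0. There exist a neighborhood 𝒩 of (U,U) in D (U = (1/d,…,1/d)) and a constant c > 0 such that for all n and almost every ω with z(n)(ω) ∈ 𝒩, and for every vector θ ∈ ℝ^{2d} with Euclidean norm 1 satisfying ∑_{k=1}^d θ_k = 0 and ∑_{k=d+1}^{2d} θ_k = 0, one has E[max(ε(n)·θ, 0) | 𝔉_n](ω) ≥ c/(n+1+d). -/

import Mathlib

open MeasureTheory Filter Finset

/-- `π_i(x) = f_δ(x_i)^{−α} / ∑_k f_δ(x_k)^{−α}` with `f_δ(x) = max(δ, x)`. -/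
noncomputable def piv (d : ℕ) (δ α : ℝ) (x : Fin d → ℝ) (i : Fin d) : ℝ :=
  (max δ (x i)) ^ (-α) / ∑ k, (max δ (x k)) ^ (-α)

/-- The empirical occupation measure: `occ d X n ω i = (1 + #{1 ≤ k ≤ n : X_k(ω) = i})/(n+d)`. -/
noncomputable def occ {Ω : Type} (d : ℕ) (X : ℕ → Ω → Fin d) (n : ℕ) (ω : Ω) (i : Fin d) : ℝ :=
  (1 + ((Finset.Icc 1 n).filter (fun k => X k ω = i)).card) / (n + d)

/-- The inner product `ε(n)·θ` of the noise `ε(n)` (with coordinates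
`ε_i(n) = (1_{X_{n+1}=i} − π_i(y(n)))/(n+1+d)` and
`ε_{d+i}(n) = (1_{Y_{n+1}=i} − π_i(x(n)))/(n+1+d)`) with `θ = (θ¹, θ²) ∈ ℝ^{2d}`. -/
noncomputable def epsDot {Ω : Type} (d : ℕ) (δ α : ℝ) (X Y : ℕ → Ω → Fin d) (n : ℕ)
    (θ : (Fin d → ℝ) × (Fin d → ℝ)) (ω : Ω) : ℝ :=
  (∑ i, ((if X (n + 1) ω = i then (1 : ℝ) else 0) - piv d δ α (occ d Y n ω) i) / (n + 1 + d) * θ.1 i) +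
  (∑ i, ((if Y (n + 1) ω = i then (1 : ℝ) else 0) - piv d δ α (occ d X n ω) i) / (n + 1 + d) * θ.2 i)

/- ## Auxiliary lemmas -/

lemma piv_denom_pos {d : ℕ} (hd : 0 < d) {δ : ℝ} (hδ : 0 < δ) (α : ℝ) (x : Fin d → ℝ) :
    0 < ∑ k, (max δ (x k)) ^ (-α) := by
  have : Nonempty (Fin d) := ⟨⟨0, hd⟩⟩
  exact Finset.sum_pos
    (fun k _ => Real.rpow_pos_of_pos (lt_of_lt_of_le hδ (le_max_left _ _)) _)
    Finset.univ_nonempty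

lemma piv_pos {d : ℕ} (hd : 0 < d) {δ : ℝ} (hδ : 0 < δ) (α : ℝ) (x : Fin d → ℝ) (i : Fin d) :
    0 < piv d δ α x i :=
  div_pos (Real.rpow_pos_of_pos (lt_of_lt_of_le hδ (le_max_left _ _)) _) (piv_denom_pos hd hδ α x)

lemma piv_sum {d : ℕ} (hd : 0 < d) {δ : ℝ} (hδ : 0 < δ) (α : ℝ) (x : Fin d → ℝ) :
    ∑ i, piv d δ α x i = 1 := by
  unfold piv
  rw [← Finset.sum_div]
  exact div_self (ne_of_gt (piv_denom_pos hd hδ α x))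

lemma piv_le_one {d : ℕ} (hd : 0 < d) {δ : ℝ} (hδ : 0 < δ) (α : ℝ) (x : Fin d → ℝ) (i : Fin d) :
    piv d δ α x i ≤ 1 := by
  have h := piv_sum hd hδ α x
  have := Finset.single_le_sum (f := fun j => piv d δ α x j)
    (fun j _ => le_of_lt (piv_pos hd hδ α x j)) (Finset.mem_univ i)
  linarith

lemma comp_abs_le_one {d : ℕ} {θ1 θ2 : Fin d → ℝ}
    (hθ : (∑ i, θ1 i ^ 2) + (∑ i, θ2 i ^ 2) = 1) (i : Fin d) : |θ1 i| ≤ 1 := by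
  rw [← sq_le_one_iff_abs_le_one]
  have h0 : (0 : ℝ) ≤ ∑ j, θ2 j ^ 2 := Finset.sum_nonneg fun j _ => sq_nonneg _
  have h3 : θ1 i ^ 2 ≤ ∑ j, θ1 j ^ 2 := by
    simpa using Finset.single_le_sum (f := fun j => θ1 j ^ 2) (fun j _ => sq_nonneg _)
      (Finset.mem_univ i)
  linarith

lemma weighted_abs_le {d : ℕ} {p θ1 : Fin d → ℝ} (hp0 : ∀ i, 0 ≤ p i) (hple : ∀ i, p i ≤ 1)
    (hθ : ∀ i, |θ1 i| ≤ 1) : |∑ k, p k * θ1 k| ≤ d := by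
  calc |∑ k, p k * θ1 k| ≤ ∑ k, |p k * θ1 k| := Finset.abs_sum_le_sum_abs _ _
    _ ≤ ∑ _k : Fin d, (1 : ℝ) := by
        apply Finset.sum_le_sum
        intro k _
        rw [abs_mul, abs_of_nonneg (hp0 k)]
        exact mul_le_one₀ (hple k) (abs_nonneg _) (hθ k)
    _ = d := by simp

lemma max_eq_half {x : ℝ} : max x 0 = (x + |x|) / 2 := by
  rcases le_total x 0 with h | h
  · rw [max_eq_right h, abs_of_nonpos h]; ring
  · rw [max_eq_left h, abs_of_nonneg h]; ring

set_option maxHeartbeats 2000000 in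
lemma core_bound {d : ℕ} (hd : 2 ≤ d) (p q θ1 θ2 : Fin d → ℝ)
    (hp : ∀ i, 3 / (4 * (d : ℝ)) ≤ p i) (hq : ∀ i, 3 / (4 * (d : ℝ)) ≤ q i)
    (hp1 : ∑ i, p i = 1) (hq1 : ∑ i, q i = 1)
    (hθ : (∑ i, θ1 i ^ 2) + (∑ i, θ2 i ^ 2) = 1)
    (h1 : ∑ i, θ1 i = 0) (h2 : ∑ i, θ2 i = 0) :
    1 / (16 * (d : ℝ) ^ 2) ≤
      ∑ i, ∑ j, p i * q j *
        max (θ1 i + θ2 j - ((∑ k, p k * θ1 k) + (∑ k, q k * θ2 k))) 0 := by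
  have hd0 : (0 : ℝ) < d := by
    have : (2 : ℝ) ≤ d := by exact_mod_cast hd
    linarith
  have hd2 : (2 : ℝ) ≤ d := by exact_mod_cast hd
  set A := ∑ k, p k * θ1 k with hAdef
  set B := ∑ k, q k * θ2 k with hBdef
  set m := A + B with hmdef
  have hp0 : ∀ i, 0 ≤ p i := fun i => le_trans (by positivity) (hp i)
  have hq0 : ∀ i, 0 ≤ q i := fun i => le_trans (by positivity) (hq i)
  have hple : ∀ i, p i ≤ 1 := fun i =>
    hp1 ▸ Finset.single_le_sum (fun j _ => hp0 j) (Finset.mem_univ i)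
  have hqle : ∀ i, q i ≤ 1 := fun i =>
    hq1 ▸ Finset.single_le_sum (fun j _ => hq0 j) (Finset.mem_univ i)
  have hθ1le : ∀ i, |θ1 i| ≤ 1 := comp_abs_le_one hθ
  have hθ2le : ∀ i, |θ2 i| ≤ 1 := comp_abs_le_one (θ1 := θ2) (θ2 := θ1) (by linarith)
  have habsA : |A| ≤ d := weighted_abs_le hp0 hple hθ1le
  have habsB : |B| ≤ d := weighted_abs_le hq0 hqle hθ2le
  have habs : ∀ i j, |θ1 i + θ2 j - m| ≤ 4 * d := by
    intro i j
    have e1 := abs_le.mp (hθ1le i)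
    have e2 := abs_le.mp (hθ2le j)
    have e3 := abs_le.mp habsA
    have e4 := abs_le.mp habsB
    rw [hmdef, abs_le]
    constructor <;> nlinarith [e1.1, e1.2, e2.1, e2.2, e3.1, e3.2, e4.1, e4.2]
  have hcrossq : ∑ j, q j * (θ2 j - B) = 0 := by
    have : ∀ j, q j * (θ2 j - B) = q j * θ2 j - B * q j := fun j => by ring
    rw [Finset.sum_congr rfl fun j _ => this j, Finset.sum_sub_distrib, ← hBdef,
      ← Finset.mul_sum, hq1, mul_one, sub_self]
  have hcrossp : ∑ i, p i * (θ1 i - A) = 0 := by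
    have : ∀ i, p i * (θ1 i - A) = p i * θ1 i - A * p i := fun i => by ring
    rw [Finset.sum_congr rfl fun i _ => this i, Finset.sum_sub_distrib, ← hAdef,
      ← Finset.mul_sum, hp1, mul_one, sub_self]
  have hsumsq1 : ∑ i, (θ1 i - A) ^ 2 = (∑ i, θ1 i ^ 2) + d * A ^ 2 := by
    have : ∀ i, (θ1 i - A) ^ 2 = θ1 i ^ 2 - (2 * A) * θ1 i + A ^ 2 := fun i => by ring
    rw [Finset.sum_congr rfl fun i _ => this i, Finset.sum_add_distrib,
      Finset.sum_sub_distrib, ← Finset.mul_sum, h1, mul_zero, sub_zero,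
      Finset.sum_const, Finset.card_univ, Fintype.card_fin, nsmul_eq_mul]
  have hsumsq2 : ∑ j, (θ2 j - B) ^ 2 = (∑ j, θ2 j ^ 2) + d * B ^ 2 := by
    have : ∀ j, (θ2 j - B) ^ 2 = θ2 j ^ 2 - (2 * B) * θ2 j + B ^ 2 := fun j => by ring
    rw [Finset.sum_congr rfl fun j _ => this j, Finset.sum_add_distrib,
      Finset.sum_sub_distrib, ← Finset.mul_sum, h2, mul_zero, sub_zero,
      Finset.sum_const, Finset.card_univ, Fintype.card_fin, nsmul_eq_mul]
  have hEzero : ∑ i, ∑ j, p i * q j * (θ1 i + θ2 j - m) = 0 := by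
    have hin : ∀ i, ∑ j, p i * q j * (θ1 i + θ2 j - m)
        = (p i * (θ1 i - m)) * 1 + p i * B := by
      intro i
      have : ∀ j, p i * q j * (θ1 i + θ2 j - m)
          = (p i * (θ1 i - m)) * q j + p i * (q j * θ2 j) := fun j => by ring
      rw [Finset.sum_congr rfl fun j _ => this j, Finset.sum_add_distrib,
        ← Finset.mul_sum, ← Finset.mul_sum, hq1, ← hBdef]
    have : ∀ i, (p i * (θ1 i - m)) * 1 + p i * B = p i * θ1 i - (m - B) * p i := fun i => by ring
    rw [Finset.sum_congr rfl fun i _ => (hin i).trans (this i), Finset.sum_sub_distrib,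
      ← hAdef, ← Finset.mul_sum, hp1, mul_one, hmdef]
    ring
  have hV : ∑ i, ∑ j, p i * q j * (θ1 i + θ2 j - m) ^ 2
      = (∑ i, p i * (θ1 i - A) ^ 2) + ∑ j, q j * (θ2 j - B) ^ 2 := by
    have hin : ∀ i, ∑ j, p i * q j * (θ1 i + θ2 j - m) ^ 2
        = (p i * (θ1 i - A) ^ 2) * 1 + p i * (∑ j, q j * (θ2 j - B) ^ 2)
          + (2 * (p i * (θ1 i - A))) * ∑ j, q j * (θ2 j - B) := by
      intro i
      have : ∀ j, p i * q j * (θ1 i + θ2 j - m) ^ 2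
          = (p i * (θ1 i - A) ^ 2) * q j + p i * (q j * (θ2 j - B) ^ 2)
            + (2 * (p i * (θ1 i - A))) * (q j * (θ2 j - B)) := by
        intro j; rw [hmdef]; ring
      rw [Finset.sum_congr rfl fun j _ => this j, Finset.sum_add_distrib,
        Finset.sum_add_distrib, ← Finset.mul_sum, ← Finset.mul_sum, ← Finset.mul_sum, hq1]
    simp only [hin, hcrossq, mul_zero, add_zero, mul_one]
    rw [Finset.sum_add_distrib, ← Finset.sum_mul, hp1, one_mul]
  have hVlow : 3 / (4 * (d : ℝ)) ≤ ∑ i, ∑ j, p i * q j * (θ1 i + θ2 j - m) ^ 2 := by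
    rw [hV]
    have l1 : (3 / (4 * (d : ℝ))) * ∑ i, θ1 i ^ 2 ≤ ∑ i, p i * (θ1 i - A) ^ 2 := by
      have s1 : ∑ i, (3 / (4 * (d : ℝ))) * (θ1 i - A) ^ 2 ≤ ∑ i, p i * (θ1 i - A) ^ 2 :=
        Finset.sum_le_sum fun i _ => mul_le_mul_of_nonneg_right (hp i) (sq_nonneg _)
      rw [← Finset.mul_sum] at s1
      have : (3 / (4 * (d : ℝ))) * ∑ i, θ1 i ^ 2 ≤ (3 / (4 * (d : ℝ))) * ∑ i, (θ1 i - A) ^ 2 := by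
        apply mul_le_mul_of_nonneg_left _ (by positivity)
        rw [hsumsq1]; nlinarith [sq_nonneg A]
      linarith
    have l2 : (3 / (4 * (d : ℝ))) * ∑ j, θ2 j ^ 2 ≤ ∑ j, q j * (θ2 j - B) ^ 2 := by
      have s1 : ∑ j, (3 / (4 * (d : ℝ))) * (θ2 j - B) ^ 2 ≤ ∑ j, q j * (θ2 j - B) ^ 2 :=
        Finset.sum_le_sum fun j _ => mul_le_mul_of_nonneg_right (hq j) (sq_nonneg _)
      rw [← Finset.mul_sum] at s1
      have : (3 / (4 * (d : ℝ))) * ∑ j, θ2 j ^ 2 ≤ (3 / (4 * (d : ℝ))) * ∑ j, (θ2 j - B) ^ 2 := by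
        apply mul_le_mul_of_nonneg_left _ (by positivity)
        rw [hsumsq2]; nlinarith [sq_nonneg B]
      linarith
    have key : (3 / (4 * (d : ℝ))) * (∑ i, θ1 i ^ 2) + (3 / (4 * (d : ℝ))) * (∑ i, θ2 i ^ 2)
        = 3 / (4 * (d : ℝ)) := by
      rw [← mul_add, hθ, mul_one]
    calc 3 / (4 * (d : ℝ))
        = (3 / (4 * (d : ℝ))) * (∑ i, θ1 i ^ 2) + (3 / (4 * (d : ℝ))) * (∑ i, θ2 i ^ 2) :=
          key.symm
      _ ≤ (∑ i, p i * (θ1 i - A) ^ 2) + ∑ j, q j * (θ2 j - B) ^ 2 := add_le_add l1 l2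
  have hVabs : ∑ i, ∑ j, p i * q j * (θ1 i + θ2 j - m) ^ 2
      ≤ (4 * d) * ∑ i, ∑ j, p i * q j * |θ1 i + θ2 j - m| := by
    rw [Finset.mul_sum]
    apply Finset.sum_le_sum; intro i _
    rw [Finset.mul_sum]
    apply Finset.sum_le_sum; intro j _
    have hpt : (θ1 i + θ2 j - m) ^ 2 ≤ (4 * d) * |θ1 i + θ2 j - m| := by
      nlinarith [abs_nonneg (θ1 i + θ2 j - m), sq_abs (θ1 i + θ2 j - m), habs i j]
    calc p i * q j * (θ1 i + θ2 j - m) ^ 2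
        ≤ p i * q j * ((4 * d) * |θ1 i + θ2 j - m|) :=
          mul_le_mul_of_nonneg_left hpt (mul_nonneg (hp0 i) (hq0 j))
      _ = 4 * ↑d * (p i * q j * |θ1 i + θ2 j - m|) := by ring
  have habsLow : 3 / (16 * (d : ℝ) ^ 2) ≤ ∑ i, ∑ j, p i * q j * |θ1 i + θ2 j - m| := by
    have h4d : (0 : ℝ) < 4 * d := by positivity
    have chain : 3 / (4 * (d : ℝ)) ≤ (4 * d) * ∑ i, ∑ j, p i * q j * |θ1 i + θ2 j - m| :=
      le_trans hVlow hVabs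
    have e : (4 * (d : ℝ)) * (3 / (4 * d)) = 3 := by field_simp
    have h3 := mul_le_mul_of_nonneg_left chain (le_of_lt h4d)
    rw [e] at h3
    rw [div_le_iff₀ (by positivity)]
    nlinarith [h3]
  have hS : ∑ i, ∑ j, p i * q j * max (θ1 i + θ2 j - m) 0
      = ((∑ i, ∑ j, p i * q j * (θ1 i + θ2 j - m))
        + ∑ i, ∑ j, p i * q j * |θ1 i + θ2 j - m|) / 2 := by
    have : ∀ i j, p i * q j * max (θ1 i + θ2 j - m) 0
        = (p i * q j * (θ1 i + θ2 j - m) + p i * q j * |θ1 i + θ2 j - m|) / 2 := by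
      intro i j; rw [max_eq_half]; ring
    rw [Finset.sum_congr rfl fun i _ => Finset.sum_congr rfl fun j _ => this i j]
    simp only [← Finset.sum_div]
    congr 1
    simp only [Finset.sum_add_distrib]
  rw [hS, hEzero, zero_add]
  rw [le_div_iff₀ (by norm_num : (0:ℝ) < 2)]
  have h16 : (0:ℝ) < 16 * (d : ℝ) ^ 2 := by positivity
  have : 1 / (16 * (d : ℝ) ^ 2) * 2 ≤ 3 / (16 * (d : ℝ) ^ 2) := by
    rw [div_mul_eq_mul_div, div_le_div_iff₀ h16 h16]
    nlinarith
  linarith [habsLow, this]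

/- ## Topology -/

lemma piv_continuous {d : ℕ} (hd : 0 < d) {δ : ℝ} (hδ : 0 < δ) (α : ℝ) (i : Fin d) :
    Continuous fun x : Fin d → ℝ => piv d δ α x i := by
  have hterm : ∀ k : Fin d, Continuous fun x : Fin d → ℝ => (max δ (x k)) ^ (-α) := by
    intro k
    rw [continuous_iff_continuousAt]
    intro x
    apply ContinuousAt.rpow_const
    · exact (continuous_const.max (continuous_apply k)).continuousAt
    · exact Or.inl (ne_of_gt (lt_of_lt_of_le hδ (le_max_left _ _)))
  exact (hterm i).div (continuous_finset_sum _ fun k _ => hterm k)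
    (fun x => ne_of_gt (piv_denom_pos hd hδ α x))

lemma piv_at_U {d : ℕ} (hd : 0 < d) {δ : ℝ} (hδ : 0 < δ) (hδ1 : δ ≤ 1 / (d : ℝ)) (α : ℝ)
    (i : Fin d) : piv d δ α (fun _ => 1 / (d : ℝ)) i = 1 / (d : ℝ) := by
  have hd0 : (0 : ℝ) < d := by exact_mod_cast hd
  unfold piv
  simp only [max_eq_right hδ1, Finset.sum_const, Finset.card_univ, Fintype.card_fin,
    nsmul_eq_mul]
  rw [div_eq_div_iff (by positivity) (ne_of_gt hd0)]
  ring

/- ## Measurability -/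

lemma max_rpow_measurable {Ω : Type} {m : MeasurableSpace Ω} {δ : ℝ} (hδ : 0 < δ) (α : ℝ)
    {f : Ω → ℝ} (hf : Measurable[m] f) :
    Measurable[m] fun ω => (max δ (f ω)) ^ (-α) := by
  have heq : (fun ω => (max δ (f ω)) ^ (-α))
      = fun ω => Real.exp (Real.log (max δ (f ω)) * (-α)) := by
    funext ω
    rw [Real.rpow_def_of_pos (lt_of_lt_of_le hδ (le_max_left _ _))]
  rw [heq]
  exact Real.measurable_exp.comp
    (((Real.measurable_log.comp (measurable_const.max hf)).mul_const _))

lemma piv_comp_measurable {d : ℕ} {Ω : Type} {m : MeasurableSpace Ω} {δ : ℝ} (hδ : 0 < δ)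
    (α : ℝ) {f : Ω → Fin d → ℝ} (hf : Measurable[m] f) (i : Fin d) :
    Measurable[m] fun ω => piv d δ α (f ω) i := by
  unfold piv
  exact (max_rpow_measurable hδ α ((measurable_pi_apply i).comp hf)).div
    (Finset.measurable_sum _ fun k _ => max_rpow_measurable hδ α
      ((measurable_pi_apply k).comp hf))

lemma occ_measurable {d : ℕ} {Ω : Type} {mΩ : MeasurableSpace Ω} (ℱ : Filtration ℕ mΩ)
    (Y : ℕ → Ω → Fin d) (hY : ∀ k, Measurable[ℱ k] (Y k)) (n : ℕ) :
    Measurable[ℱ n] (occ d Y n) := by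
  rw [@measurable_pi_iff Ω (Fin d) (fun _ => ℝ) (ℱ n) _ (occ d Y n)]
  intro i
  unfold occ
  apply Measurable.div_const
  apply Measurable.const_add
  have heq : (fun ω => (((Finset.Icc 1 n).filter (fun k => Y k ω = i)).card : ℝ))
      = fun ω => ∑ k ∈ Finset.Icc 1 n, if Y k ω = i then (1 : ℝ) else 0 := by
    funext ω
    rw [Finset.card_filter, Nat.cast_sum]
    exact Finset.sum_congr rfl fun k _ => by split_ifs <;> simp
  rw [heq]
  apply Finset.measurable_sum
  intro k hk
  have hkn : k ≤ n := (Finset.mem_Icc.mp hk).2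
  have hYk : Measurable[ℱ n] (Y k) := (hY k).mono (ℱ.mono hkn) le_rfl
  exact Measurable.ite (hYk (measurableSet_singleton i)) measurable_const measurable_const

/- ## Decomposition of the positive part of the noise -/

noncomputable def mAux (d : ℕ) (δ α : ℝ) {Ω : Type} (X Y : ℕ → Ω → Fin d) (n : ℕ)
    (θ : (Fin d → ℝ) × (Fin d → ℝ)) (ω : Ω) : ℝ :=
  (∑ k, piv d δ α (occ d Y n ω) k * θ.1 k) + (∑ k, piv d δ α (occ d X n ω) k * θ.2 k)

noncomputable def GAux (d : ℕ) (δ α : ℝ) {Ω : Type} (X Y : ℕ → Ω → Fin d) (n : ℕ)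
    (θ : (Fin d → ℝ) × (Fin d → ℝ)) (i j : Fin d) (ω : Ω) : ℝ :=
  max ((θ.1 i + θ.2 j - mAux d δ α X Y n θ ω) / (n + 1 + d)) 0

lemma ind_sum {d : ℕ} (Z : Fin d) (θ' r : Fin d → ℝ) (N : ℝ) :
    ∑ i, ((if Z = i then (1 : ℝ) else 0) - r i) / N * θ' i
      = (θ' Z - ∑ i, r i * θ' i) / N := by
  have h : ∀ i, ((if Z = i then (1 : ℝ) else 0) - r i) / N * θ' i
      = (if Z = i then θ' i else 0) / N - r i * θ' i / N := by
    intro i; split_ifs <;> ring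
  rw [Finset.sum_congr rfl fun i _ => h i, Finset.sum_sub_distrib,
    ← Finset.sum_div, ← Finset.sum_div, Finset.sum_ite_eq, if_pos (Finset.mem_univ Z),
    sub_div]

lemma max_epsDot_decomp {d : ℕ} {Ω : Type} (δ α : ℝ) (X Y : ℕ → Ω → Fin d) (n : ℕ)
    (θ : (Fin d → ℝ) × (Fin d → ℝ)) :
    (fun ω => max (epsDot d δ α X Y n θ ω) 0)
      = fun ω => ∑ i, ∑ j, GAux d δ α X Y n θ i j ω *
          ((if X (n + 1) ω = i then (1 : ℝ) else 0) *
            (if Y (n + 1) ω = j then (1 : ℝ) else 0)) := by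
  funext ω
  have hR : ∑ i, ∑ j, GAux d δ α X Y n θ i j ω *
      ((if X (n + 1) ω = i then (1 : ℝ) else 0) * (if Y (n + 1) ω = j then (1 : ℝ) else 0))
      = GAux d δ α X Y n θ (X (n + 1) ω) (Y (n + 1) ω) ω := by
    rw [Finset.sum_eq_single (X (n + 1) ω)]
    · rw [Finset.sum_eq_single (Y (n + 1) ω)]
      · simp
      · intro j _ hj; simp [Ne.symm hj]
      · intro h; exact absurd (Finset.mem_univ _) h
    · intro i _ hi
      apply Finset.sum_eq_zero; intro j _
      simp [Ne.symm hi]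
    · intro h; exact absurd (Finset.mem_univ _) h
  rw [hR]
  unfold epsDot GAux mAux
  rw [ind_sum (X (n + 1) ω) θ.1 (fun i => piv d δ α (occ d Y n ω) i),
    ind_sum (Y (n + 1) ω) θ.2 (fun i => piv d δ α (occ d X n ω) i),
    ← add_div]
  congr 1
  ring

/- ## Main theorem -/

set_option maxHeartbeats 2000000 in
/-- Lemma `condition3`: for `d ≥ 2`, `0 < δ < 1/(2d)`, `α > 0`, there are a
neighborhood `𝒩` of `(U,U)` in `D` and `c > 0` such that for all `n`, a.e. `ω` with
`z(n)(ω) ∈ 𝒩`, and every Euclidean unit vector `θ` in the tangent space,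
`E[max(ε(n)·θ, 0) | 𝔉_n](ω) ≥ c/(n+1+d)`. -/
theorem stmt_7 (d : ℕ) (hd : 2 ≤ d) (δ : ℝ) (hδ : 0 < δ) (hδ' : δ < 1 / (2 * d))
    (α : ℝ) (hα : 0 < α)
    (Ω : Type) (mΩ : MeasurableSpace Ω) (P : Measure Ω) (hP : IsProbabilityMeasure P)
    (ℱ : Filtration ℕ mΩ) (X Y : ℕ → Ω → Fin d)
    (hX : ∀ n, Measurable[ℱ n] (X n))
    (hY : ∀ n, Measurable[ℱ n] (Y n))
    (hcond : ∀ (n : ℕ) (i j : Fin d),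
      (P[(fun ω => (if X (n + 1) ω = i then (1 : ℝ) else 0) *
            (if Y (n + 1) ω = j then (1 : ℝ) else 0)) | ℱ n]) =ᵐ[P]
        fun ω => piv d δ α (occ d Y n ω) i * piv d δ α (occ d X n ω) j) :
    ∃ 𝒩 : Set ((Fin d → ℝ) × (Fin d → ℝ)),
      𝒩 ∈ nhdsWithin ((fun _ => 1 / (d : ℝ)), (fun _ => 1 / (d : ℝ)))
          {z : (Fin d → ℝ) × (Fin d → ℝ) |
            ((∀ i, 0 ≤ z.1 i) ∧ ∑ i, z.1 i = 1) ∧ (∀ i, 0 ≤ z.2 i) ∧ ∑ i, z.2 i = 1} ∧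
      ∃ c : ℝ, 0 < c ∧
        ∀ (n : ℕ) (θ : (Fin d → ℝ) × (Fin d → ℝ)),
          (∑ i, (θ.1 i) ^ 2) + (∑ i, (θ.2 i) ^ 2) = 1 →
          ∑ i, θ.1 i = 0 → ∑ i, θ.2 i = 0 →
          ∀ᵐ ω ∂P, ((occ d X n ω, occ d Y n ω) :
              (Fin d → ℝ) × (Fin d → ℝ)) ∈ 𝒩 →
            c / (n + 1 + d) ≤ (P[(fun ω' => max (epsDot d δ α X Y n θ ω') 0) | ℱ n]) ω := by
  classical
  have hd0 : 0 < d := lt_of_lt_of_le (by norm_num) hd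
  have hdR : (0 : ℝ) < d := by exact_mod_cast hd0
  have hd2R : (2 : ℝ) ≤ d := by exact_mod_cast hd
  have hδ1 : δ ≤ 1 / (d : ℝ) := by
    have h2 : 1 / (2 * (d : ℝ)) ≤ 1 / (d : ℝ) := by
      apply one_div_le_one_div_of_le hdR
      linarith
    linarith
  refine ⟨{z : (Fin d → ℝ) × (Fin d → ℝ) |
      (∀ i, 3 / (4 * (d : ℝ)) ≤ piv d δ α z.1 i) ∧
      (∀ i, 3 / (4 * (d : ℝ)) ≤ piv d δ α z.2 i)},
    ?_, 1 / (16 * (d : ℝ) ^ 2), by positivity, ?_⟩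
  · -- the neighborhood condition
    apply mem_nhdsWithin_of_mem_nhds
    have hlt : 3 / (4 * (d : ℝ)) < 1 / (d : ℝ) := by
      rw [div_lt_div_iff₀ (by positivity) hdR]
      nlinarith
    have hev : ∀ᶠ z : (Fin d → ℝ) × (Fin d → ℝ) in
        nhds ((fun _ => 1 / (d : ℝ)), (fun _ => 1 / (d : ℝ))),
        (∀ i, 3 / (4 * (d : ℝ)) ≤ piv d δ α z.1 i) ∧
        (∀ i, 3 / (4 * (d : ℝ)) ≤ piv d δ α z.2 i) := by
      rw [eventually_and]
      constructor
      · rw [Filter.eventually_all]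
        intro i
        have hc : ContinuousAt (fun z : (Fin d → ℝ) × (Fin d → ℝ) => piv d δ α z.1 i)
            ((fun _ => 1 / (d : ℝ)), (fun _ => 1 / (d : ℝ))) :=
          ((piv_continuous hd0 hδ α i).comp continuous_fst).continuousAt
        have hlt' : 3 / (4 * (d : ℝ)) < piv d δ α (fun _ => 1 / (d : ℝ)) i := by
          rw [piv_at_U hd0 hδ hδ1 α i]; exact hlt
        exact hc.eventually (eventually_ge_nhds hlt')
      · rw [Filter.eventually_all]
        intro i
        have hc : ContinuousAt (fun z : (Fin d → ℝ) × (Fin d → ℝ) => piv d δ α z.2 i)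
            ((fun _ => 1 / (d : ℝ)), (fun _ => 1 / (d : ℝ))) :=
          ((piv_continuous hd0 hδ α i).comp continuous_snd).continuousAt
        have hlt' : 3 / (4 * (d : ℝ)) < piv d δ α (fun _ => 1 / (d : ℝ)) i := by
          rw [piv_at_U hd0 hδ hδ1 α i]; exact hlt
        exact hc.eventually (eventually_ge_nhds hlt')
    exact hev
  · -- the main estimate
    intro n θ hθnorm hθs1 hθs2
    have hNpos : (0 : ℝ) < (n : ℝ) + 1 + d := by positivity
    have hN1 : (1 : ℝ) ≤ (n : ℝ) + 1 + d := by
      have : (0 : ℝ) ≤ n := Nat.cast_nonneg n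
      linarith
    -- measurability facts
    have hoccX : Measurable[ℱ n] (occ d X n) := occ_measurable ℱ X hX n
    have hoccY : Measurable[ℱ n] (occ d Y n) := occ_measurable ℱ Y hY n
    have hpmeas : ∀ i : Fin d, Measurable[ℱ n] fun ω => piv d δ α (occ d Y n ω) i :=
      fun i => piv_comp_measurable hδ α hoccY i
    have hqmeas : ∀ j : Fin d, Measurable[ℱ n] fun ω => piv d δ α (occ d X n ω) j :=
      fun j => piv_comp_measurable hδ α hoccX j
    have hmmeas : Measurable[ℱ n] (mAux d δ α X Y n θ) := by
      unfold mAux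
      exact (Finset.measurable_sum _ fun k _ => (hpmeas k).mul_const _).add
        (Finset.measurable_sum _ fun k _ => (hqmeas k).mul_const _)
    have hGmeas : ∀ i j : Fin d, Measurable[ℱ n] (GAux d δ α X Y n θ i j) := by
      intro i j
      unfold GAux
      exact ((measurable_const.sub hmmeas).div_const _).max measurable_const
    -- bounds
    have hθ1le : ∀ i, |θ.1 i| ≤ 1 := comp_abs_le_one hθnorm
    have hθ2le : ∀ i, |θ.2 i| ≤ 1 :=
      comp_abs_le_one (θ1 := θ.2) (θ2 := θ.1) (by linarith)
    have hmbd : ∀ ω, |mAux d δ α X Y n θ ω| ≤ 2 * d := by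
      intro ω
      unfold mAux
      have b1 : |∑ k, piv d δ α (occ d Y n ω) k * θ.1 k| ≤ d :=
        weighted_abs_le (fun i => le_of_lt (piv_pos hd0 hδ α _ i))
          (fun i => piv_le_one hd0 hδ α _ i) hθ1le
      have b2 : |∑ k, piv d δ α (occ d X n ω) k * θ.2 k| ≤ d :=
        weighted_abs_le (fun i => le_of_lt (piv_pos hd0 hδ α _ i))
          (fun i => piv_le_one hd0 hδ α _ i) hθ2le
      calc |(∑ k, piv d δ α (occ d Y n ω) k * θ.1 k) +
            ∑ k, piv d δ α (occ d X n ω) k * θ.2 k|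
          ≤ |∑ k, piv d δ α (occ d Y n ω) k * θ.1 k| +
            |∑ k, piv d δ α (occ d X n ω) k * θ.2 k| := abs_add_le _ _
        _ ≤ 2 * d := by linarith
    have hGbd : ∀ (i j : Fin d) ω, |GAux d δ α X Y n θ i j ω| ≤ 2 + 2 * (d : ℝ) := by
      intro i j ω
      unfold GAux
      have hnum : |θ.1 i + θ.2 j - mAux d δ α X Y n θ ω| ≤ 2 + 2 * (d : ℝ) := by
        have e1 := abs_le.mp (hθ1le i)
        have e2 := abs_le.mp (hθ2le j)
        have e3 := abs_le.mp (hmbd ω)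
        rw [abs_le]
        exact ⟨by linarith [e1.1, e2.1, e3.2], by linarith [e1.2, e2.2, e3.1]⟩
      have h0 : |max ((θ.1 i + θ.2 j - mAux d δ α X Y n θ ω) / ((n : ℝ) + 1 + d)) 0|
          ≤ |(θ.1 i + θ.2 j - mAux d δ α X Y n θ ω) / ((n : ℝ) + 1 + d)| := by
        rcases le_total ((θ.1 i + θ.2 j - mAux d δ α X Y n θ ω) / ((n : ℝ) + 1 + d)) 0
          with h | h
        · rw [max_eq_right h]; simp [abs_nonneg]
        · rw [max_eq_left h]
      calc |max ((θ.1 i + θ.2 j - mAux d δ α X Y n θ ω) / ((n : ℝ) + 1 + d)) 0|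
          ≤ |(θ.1 i + θ.2 j - mAux d δ α X Y n θ ω) / ((n : ℝ) + 1 + d)| := h0
        _ = |θ.1 i + θ.2 j - mAux d δ α X Y n θ ω| / ((n : ℝ) + 1 + d) := by
            rw [abs_div, abs_of_pos hNpos]
        _ ≤ |θ.1 i + θ.2 j - mAux d δ α X Y n θ ω| := div_le_self (abs_nonneg _) hN1
        _ ≤ 2 + 2 * (d : ℝ) := hnum
    -- integrability
    have hindmeas : ∀ i j : Fin d, Measurable (fun ω =>
        (if X (n + 1) ω = i then (1 : ℝ) else 0) *
        (if Y (n + 1) ω = j then (1 : ℝ) else 0)) := by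
      intro i j
      apply Measurable.mul
      · exact Measurable.ite (((hX (n + 1)).mono (ℱ.le (n + 1)) le_rfl)
          (measurableSet_singleton i)) measurable_const measurable_const
      · exact Measurable.ite (((hY (n + 1)).mono (ℱ.le (n + 1)) le_rfl)
          (measurableSet_singleton j)) measurable_const measurable_const
    have hindbd : ∀ (i j : Fin d) ω, |(if X (n + 1) ω = i then (1 : ℝ) else 0) *
        (if Y (n + 1) ω = j then (1 : ℝ) else 0)| ≤ 1 := by
      intro i j ω
      by_cases h1 : X (n + 1) ω = i <;> by_cases h2 : Y (n + 1) ω = j <;> simp [h1, h2]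
    have hind_int : ∀ i j : Fin d, Integrable (fun ω =>
        (if X (n + 1) ω = i then (1 : ℝ) else 0) *
        (if Y (n + 1) ω = j then (1 : ℝ) else 0)) P := by
      intro i j
      refine Integrable.mono' (integrable_const (1 : ℝ))
        (hindmeas i j).aestronglyMeasurable (ae_of_all _ fun ω => ?_)
      rw [Real.norm_eq_abs]
      exact hindbd i j ω
    have hf_int : ∀ i j : Fin d, Integrable (fun ω => GAux d δ α X Y n θ i j ω *
        ((if X (n + 1) ω = i then (1 : ℝ) else 0) *
          (if Y (n + 1) ω = j then (1 : ℝ) else 0))) P := by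
      intro i j
      refine Integrable.mono' (integrable_const (2 + 2 * (d : ℝ)))
        ((((hGmeas i j).mono (ℱ.le n) le_rfl).mul (hindmeas i j)).aestronglyMeasurable)
        (ae_of_all _ fun ω => ?_)
      rw [Real.norm_eq_abs, abs_mul]
      calc |GAux d δ α X Y n θ i j ω| * |(if X (n + 1) ω = i then (1 : ℝ) else 0) *
            (if Y (n + 1) ω = j then (1 : ℝ) else 0)|
          ≤ (2 + 2 * (d : ℝ)) * 1 :=
            mul_le_mul (hGbd i j ω) (hindbd i j ω) (abs_nonneg _) (by positivity)
        _ = 2 + 2 * (d : ℝ) := mul_one _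
    -- conditional expectation of each summand
    have hce : ∀ i j : Fin d,
        (P[(fun ω => GAux d δ α X Y n θ i j ω *
            ((if X (n + 1) ω = i then (1 : ℝ) else 0) *
              (if Y (n + 1) ω = j then (1 : ℝ) else 0))) | ℱ n]) =ᵐ[P]
          fun ω => GAux d δ α X Y n θ i j ω *
            (piv d δ α (occ d Y n ω) i * piv d δ α (occ d X n ω) j) := by
      intro i j
      have h1 : (P[(GAux d δ α X Y n θ i j * fun ω =>
          ((if X (n + 1) ω = i then (1 : ℝ) else 0) *
            (if Y (n + 1) ω = j then (1 : ℝ) else 0))) | ℱ n]) =ᵐ[P]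
          GAux d δ α X Y n θ i j * (P[(fun ω =>
            ((if X (n + 1) ω = i then (1 : ℝ) else 0) *
              (if Y (n + 1) ω = j then (1 : ℝ) else 0))) | ℱ n]) :=
        condExp_mul_of_stronglyMeasurable_left ((hGmeas i j).stronglyMeasurable)
          (hf_int i j) (hind_int i j)
      refine h1.trans ?_
      filter_upwards [hcond n i j] with ω hω
      rw [Pi.mul_apply, hω]
    -- summing up
    have hgi_int : ∀ i : Fin d, Integrable (fun ω => ∑ j, GAux d δ α X Y n θ i j ω *
        ((if X (n + 1) ω = i then (1 : ℝ) else 0) *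
          (if Y (n + 1) ω = j then (1 : ℝ) else 0))) P := by
      intro i
      exact integrable_finset_sum _ fun j _ => hf_int i j
    have hce_inner : ∀ i : Fin d, (P[(fun ω => ∑ j, GAux d δ α X Y n θ i j ω *
        ((if X (n + 1) ω = i then (1 : ℝ) else 0) *
          (if Y (n + 1) ω = j then (1 : ℝ) else 0))) | ℱ n]) =ᵐ[P]
        fun ω => ∑ j, (P[(fun ω' => GAux d δ α X Y n θ i j ω' *
          ((if X (n + 1) ω' = i then (1 : ℝ) else 0) *
            (if Y (n + 1) ω' = j then (1 : ℝ) else 0))) | ℱ n]) ω := by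
      intro i
      have heq : (fun ω => ∑ j, GAux d δ α X Y n θ i j ω *
          ((if X (n + 1) ω = i then (1 : ℝ) else 0) *
            (if Y (n + 1) ω = j then (1 : ℝ) else 0)))
          = ∑ j, (fun ω => GAux d δ α X Y n θ i j ω *
            ((if X (n + 1) ω = i then (1 : ℝ) else 0) *
              (if Y (n + 1) ω = j then (1 : ℝ) else 0))) := by
        funext ω
        rw [Finset.sum_apply]
      rw [heq]
      filter_upwards [condExp_finsetSum (fun j _ => hf_int i j) (ℱ n)] with ω hω
      rw [hω, Finset.sum_apply]
    have hce_outer : (P[(fun ω => ∑ i, ∑ j, GAux d δ α X Y n θ i j ω *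
        ((if X (n + 1) ω = i then (1 : ℝ) else 0) *
          (if Y (n + 1) ω = j then (1 : ℝ) else 0))) | ℱ n]) =ᵐ[P]
        fun ω => ∑ i, (P[(fun ω' => ∑ j, GAux d δ α X Y n θ i j ω' *
          ((if X (n + 1) ω' = i then (1 : ℝ) else 0) *
            (if Y (n + 1) ω' = j then (1 : ℝ) else 0))) | ℱ n]) ω := by
      have heq : (fun ω => ∑ i, ∑ j, GAux d δ α X Y n θ i j ω *
          ((if X (n + 1) ω = i then (1 : ℝ) else 0) *
            (if Y (n + 1) ω = j then (1 : ℝ) else 0)))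
          = ∑ i, (fun ω => ∑ j, GAux d δ α X Y n θ i j ω *
            ((if X (n + 1) ω = i then (1 : ℝ) else 0) *
              (if Y (n + 1) ω = j then (1 : ℝ) else 0))) := by
        funext ω
        rw [Finset.sum_apply]
      rw [heq]
      filter_upwards [condExp_finsetSum (fun i _ => hgi_int i) (ℱ n)] with ω hω
      rw [hω, Finset.sum_apply]
    -- the full identification of the conditional expectation
    have hmain : (P[(fun ω' => max (epsDot d δ α X Y n θ ω') 0) | ℱ n]) =ᵐ[P]
        fun ω => ∑ i, ∑ j, GAux d δ α X Y n θ i j ω *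
          (piv d δ α (occ d Y n ω) i * piv d δ α (occ d X n ω) j) := by
      rw [max_epsDot_decomp]
      refine hce_outer.trans ?_
      have hallinner : ∀ᵐ ω ∂P, ∀ i : Fin d,
          (P[(fun ω' => ∑ j, GAux d δ α X Y n θ i j ω' *
            ((if X (n + 1) ω' = i then (1 : ℝ) else 0) *
              (if Y (n + 1) ω' = j then (1 : ℝ) else 0))) | ℱ n]) ω
          = ∑ j, (P[(fun ω' => GAux d δ α X Y n θ i j ω' *
            ((if X (n + 1) ω' = i then (1 : ℝ) else 0) *
              (if Y (n + 1) ω' = j then (1 : ℝ) else 0))) | ℱ n]) ω :=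
        ae_all_iff.mpr fun i => hce_inner i
      have hallce : ∀ᵐ ω ∂P, ∀ i j : Fin d,
          (P[(fun ω' => GAux d δ α X Y n θ i j ω' *
            ((if X (n + 1) ω' = i then (1 : ℝ) else 0) *
              (if Y (n + 1) ω' = j then (1 : ℝ) else 0))) | ℱ n]) ω
          = GAux d δ α X Y n θ i j ω *
            (piv d δ α (occ d Y n ω) i * piv d δ α (occ d X n ω) j) :=
        ae_all_iff.mpr fun i => ae_all_iff.mpr fun j => hce i j
      filter_upwards [hallinner, hallce] with ω h1 h2
      exact Finset.sum_congr rfl fun i _ =>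
        (h1 i).trans (Finset.sum_congr rfl fun j _ => h2 i j)
    -- conclusion
    filter_upwards [hmain] with ω hω hmem
    rw [hω]
    obtain ⟨hm1, hm2⟩ := hmem
    have hps : ∑ i, piv d δ α (occ d Y n ω) i = 1 := piv_sum hd0 hδ α _
    have hqs : ∑ i, piv d δ α (occ d X n ω) i = 1 := piv_sum hd0 hδ α _
    have hcore := core_bound hd (fun i => piv d δ α (occ d Y n ω) i)
      (fun j => piv d δ α (occ d X n ω) j) θ.1 θ.2 hm2 hm1 hps hqs hθnorm hθs1 hθs2
    have hid : ∑ i, ∑ j, GAux d δ α X Y n θ i j ω *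
        (piv d δ α (occ d Y n ω) i * piv d δ α (occ d X n ω) j)
        = (∑ i, ∑ j, piv d δ α (occ d Y n ω) i * piv d δ α (occ d X n ω) j *
            max (θ.1 i + θ.2 j - mAux d δ α X Y n θ ω) 0) / ((n : ℝ) + 1 + d) := by
      rw [Finset.sum_div]
      refine Finset.sum_congr rfl fun i _ => ?_
      rw [Finset.sum_div]
      refine Finset.sum_congr rfl fun j _ => ?_
      unfold GAux
      rw [show max ((θ.1 i + θ.2 j - mAux d δ α X Y n θ ω) / ((n : ℝ) + 1 + d)) 0
          = max (θ.1 i + θ.2 j - mAux d δ α X Y n θ ω) 0 / ((n : ℝ) + 1 + d) by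
        rw [← max_div_div_right (le_of_lt hNpos), zero_div]]
      ring
    rw [hid]
    have hrfl : mAux d δ α X Y n θ ω
        = (∑ k, piv d δ α (occ d Y n ω) k * θ.1 k)
          + (∑ k, piv d δ α (occ d X n ω) k * θ.2 k) := rfl
    have hfinal : 1 / (16 * (d : ℝ) ^ 2)
        ≤ ∑ i, ∑ j, piv d δ α (occ d Y n ω) i * piv d δ α (occ d X n ω) j *
            max (θ.1 i + θ.2 j - mAux d δ α X Y n θ ω) 0 := by
      rw [hrfl]
      exact hcore
    exact (div_le_div_iff_of_pos_right hNpos).mpr hfinal
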